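/- Suppose V has dimension 3 over ℝ. Then for every element U of the Clifford algebra Cl(Q), both U + reverse(involute(U)) and involute(U) + reverse(U) belong to the center of Cl(Q). -/

import Mathlib

open CliffordAlgebra

set_option maxHeartbeats 1600000 in
private lemma aux_main {V : Type*} [AddCommGroup V] [Module ℝ V] (Q : QuadraticForm ℝ V)
    (e : Fin 3 → V) (horth : ∀ i j, i ≠ j → Q.IsOrtho (e i) (e j))
    (hspan : Submodule.span ℝ (Set.range e) = ⊤) (U : CliffordAlgebra Q) :
    U + reverse (involute U) ∈ Subalgebra.center ℝ (CliffordAlgebra Q) ∧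
    involute U + reverse U ∈ Subalgebra.center ℝ (CliffordAlgebra Q) := by
  set Z := Subalgebra.center ℝ (CliffordAlgebra Q) with hZ
  set x : Fin 3 → CliffordAlgebra Q := fun i => ι Q (e i) with hx
  have ha : ∀ i j, i ≠ j → x i * x j = -(x j * x i) := fun i j hij =>
    ι_mul_ι_comm_of_isOrtho (horth i j hij)
  have ha' : ∀ i j, i ≠ j → ∀ t : CliffordAlgebra Q,
      x i * (x j * t) = -(x j * (x i * t)) := by
    intro i j hij t
    rw [← mul_assoc, ha i j hij, neg_mul, mul_assoc]
  have hs : ∀ (i) (t : CliffordAlgebra Q), x i * (x i * t) = Q (e i) • t := by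
    intro i t
    rw [← mul_assoc, hx]
    rw [ι_sq_scalar, Algebra.smul_def]
  have hq : ∀ i, x i * x i = algebraMap ℝ _ (Q (e i)) := fun i => ι_sq_scalar Q (e i)
  have t10 := ha 1 0 (by decide)
  have t20 := ha 2 0 (by decide)
  have t21 := ha 2 1 (by decide)
  have a10 := ha' 1 0 (by decide)
  have a20 := ha' 2 0 (by decide)
  have a21 := ha' 2 1 (by decide)
  have s0 := hs 0
  have s1 := hs 1
  have s2 := hs 2
  have q0 := hq 0
  have q1 := hq 1
  have q2 := hq 2
  -- commuting with generators implies central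
  have hcen : ∀ X : CliffordAlgebra Q, (∀ i, X * x i = x i * X) → X ∈ Z := by
    intro X hX
    rw [hZ, Subalgebra.mem_center_iff]
    intro y
    induction y using CliffordAlgebra.induction with
    | algebraMap r => exact Algebra.commutes r X
    | ι v =>
      have hv : v ∈ Submodule.span ℝ (Set.range e) := hspan ▸ Submodule.mem_top
      induction hv using Submodule.span_induction with
      | mem w hw => obtain ⟨i, rfl⟩ := hw; exact (hX i).symm
      | zero => simp
      | add w₁ w₂ _ _ h1 h2 => rw [map_add, add_mul, mul_add, h1, h2]
      | smul c w _ hw => rw [map_smul, smul_mul_assoc, mul_smul_comm, hw]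
    | mul y₁ y₂ h1 h2 => rw [mul_assoc, h2, ← mul_assoc, h1, mul_assoc]
    | add y₁ y₂ h1 h2 => rw [add_mul, mul_add, h1, h2]
  -- the pseudoscalar is central
  have hωZ : x 0 * (x 1 * x 2) ∈ Z := by
    apply hcen
    have c0 : x 0 * (x 1 * x 2) * x 0 = x 0 * (x 0 * (x 1 * x 2)) := by
      simp only [mul_assoc, t10, t20, t21, a10, a20, a21, s0, s1, s2, q0, q1, q2,
        mul_neg, neg_mul, neg_neg, mul_smul_comm, smul_neg]
    have c1 : x 0 * (x 1 * x 2) * x 1 = x 1 * (x 0 * (x 1 * x 2)) := by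
      simp only [mul_assoc, t10, t20, t21, a10, a20, a21, s0, s1, s2, q0, q1, q2,
        mul_neg, neg_mul, neg_neg, mul_smul_comm, smul_neg]
    have c2 : x 0 * (x 1 * x 2) * x 2 = x 2 * (x 0 * (x 1 * x 2)) := by
      simp only [mul_assoc, t10, t20, t21, a10, a20, a21, s0, s1, s2, q0, q1, q2,
        mul_neg, neg_mul, neg_neg, mul_smul_comm, smul_neg]
    intro i
    fin_cases i
    · exact c0
    · exact c1
    · exact c2
  -- the span of the 8 monomials
  set S : Set (CliffordAlgebra Q) :=
    {1, x 0, x 1, x 2, x 0 * x 1, x 0 * x 2, x 1 * x 2, x 0 * (x 1 * x 2)} with hS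
  set M : Submodule ℝ (CliffordAlgebra Q) := Submodule.span ℝ S with hM
  have hm1 : (1 : CliffordAlgebra Q) ∈ M := Submodule.subset_span (by simp [hS])
  have mx0 : x 0 ∈ M := Submodule.subset_span (by simp [hS])
  have mx1 : x 1 ∈ M := Submodule.subset_span (by simp [hS])
  have mx2 : x 2 ∈ M := Submodule.subset_span (by simp [hS])
  have m01 : x 0 * x 1 ∈ M := Submodule.subset_span (by simp [hS])
  have m02 : x 0 * x 2 ∈ M := Submodule.subset_span (by simp [hS])
  have m12 : x 1 * x 2 ∈ M := Submodule.subset_span (by simp [hS])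
  have mw : x 0 * (x 1 * x 2) ∈ M := Submodule.subset_span (by simp [hS])
  have hc0 : ∀ g ∈ S, x 0 * g ∈ M := by
    intro g hg
    simp only [hS, Set.mem_insert_iff, Set.mem_singleton_iff] at hg
    rcases hg with rfl | rfl | rfl | rfl | rfl | rfl | rfl | rfl <;>
      (try simp only [mul_one, mul_assoc, t10, t20, t21, a10, a20, a21, s0, s1, s2, q0, q1, q2,
        mul_neg, neg_mul, neg_neg, mul_smul_comm, smul_neg,
        Algebra.algebraMap_eq_smul_one]) <;>
      apply_rules [Submodule.neg_mem, Submodule.smul_mem, hm1, mx0, mx1, mx2, m01, m02, m12, mw]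
  have hc1 : ∀ g ∈ S, x 1 * g ∈ M := by
    intro g hg
    simp only [hS, Set.mem_insert_iff, Set.mem_singleton_iff] at hg
    rcases hg with rfl | rfl | rfl | rfl | rfl | rfl | rfl | rfl <;>
      (try simp only [mul_one, mul_assoc, t10, t20, t21, a10, a20, a21, s0, s1, s2, q0, q1, q2,
        mul_neg, neg_mul, neg_neg, mul_smul_comm, smul_neg,
        Algebra.algebraMap_eq_smul_one]) <;>
      apply_rules [Submodule.neg_mem, Submodule.smul_mem, hm1, mx0, mx1, mx2, m01, m02, m12, mw]
  have hc2 : ∀ g ∈ S, x 2 * g ∈ M := by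
    intro g hg
    simp only [hS, Set.mem_insert_iff, Set.mem_singleton_iff] at hg
    rcases hg with rfl | rfl | rfl | rfl | rfl | rfl | rfl | rfl <;>
      (try simp only [mul_one, mul_assoc, t10, t20, t21, a10, a20, a21, s0, s1, s2, q0, q1, q2,
        mul_neg, neg_mul, neg_neg, mul_smul_comm, smul_neg,
        Algebra.algebraMap_eq_smul_one]) <;>
      apply_rules [Submodule.neg_mem, Submodule.smul_mem, hm1, mx0, mx1, mx2, m01, m02, m12, mw]
  have hcl : ∀ i, ∀ m ∈ M, x i * m ∈ M := by
    intro i m hm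
    induction hm using Submodule.span_induction with
    | mem g hg =>
      fin_cases i
      · exact hc0 g hg
      · exact hc1 g hg
      · exact hc2 g hg
    | zero => simpa using M.zero_mem
    | add g₁ g₂ _ _ h1 h2 => rw [mul_add]; exact add_mem h1 h2
    | smul c g _ hg => rw [mul_smul_comm]; exact M.smul_mem c hg
  have hmul : ∀ W : CliffordAlgebra Q, ∀ m ∈ M, W * m ∈ M := by
    intro W
    induction W using CliffordAlgebra.induction with
    | algebraMap r =>
      intro m hm
      rw [← Algebra.smul_def]
      exact M.smul_mem r hm
    | ι v =>
      intro m hm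
      have hv : v ∈ Submodule.span ℝ (Set.range e) := hspan ▸ Submodule.mem_top
      induction hv using Submodule.span_induction with
      | mem w hw => obtain ⟨i, rfl⟩ := hw; exact hcl i m hm
      | zero => simpa using M.zero_mem
      | add w₁ w₂ _ _ h1 h2 => rw [map_add, add_mul]; exact add_mem h1 h2
      | smul c w _ hw => rw [map_smul, smul_mul_assoc]; exact M.smul_mem c hw
    | mul A B hA hB => intro m hm; rw [mul_assoc]; exact hA _ (hB m hm)
    | add A B hA hB => intro m hm; rw [add_mul]; exact add_mem (hA m hm) (hB m hm)
  have hall : ∀ W : CliffordAlgebra Q, W ∈ M := fun W => by simpa using hmul W 1 hm1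
  -- involute/reverse computations on the monomials
  have iι : ∀ i, involute (x i) = -x i := fun i => involute_ι (e i)
  have rι : ∀ i, reverse (x i) = x i := fun i => reverse_ι (e i)
  have i2 : ∀ i j, involute (x i * x j) = x i * x j := by
    intro i j; rw [map_mul, iι, iι, neg_mul_neg]
  have r2 : ∀ i j, i ≠ j → reverse (x i * x j) = -(x i * x j) := by
    intro i j hij; rw [reverse.map_mul, rι, rι, ha j i (Ne.symm hij)]
  have iω : involute (x 0 * (x 1 * x 2)) = -(x 0 * (x 1 * x 2)) := by
    rw [map_mul, map_mul, iι, iι, iι]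
    simp only [mul_neg, neg_mul, neg_neg]
  have rω : reverse (x 0 * (x 1 * x 2)) = -(x 0 * (x 1 * x 2)) := by
    rw [reverse.map_mul, reverse.map_mul, rι, rι, rι]
    simp only [mul_assoc, t10, t20, t21, a10, a20, a21, mul_neg, neg_mul, neg_neg]
  -- the main claim, for all of M
  have key : ∀ m ∈ M,
      m + reverse (involute m) ∈ Z ∧ involute m + reverse m ∈ Z := by
    intro m hm
    induction hm using Submodule.span_induction with
    | mem g hg =>
      simp only [hS, Set.mem_insert_iff, Set.mem_singleton_iff] at hg
      rcases hg with rfl | rfl | rfl | rfl | rfl | rfl | rfl | rfl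
      · constructor <;>
          · rw [map_one, reverse.map_one]
            exact add_mem Z.one_mem Z.one_mem
      · exact ⟨by rw [iι, map_neg, rι, add_neg_cancel]; exact Z.zero_mem,
          by rw [iι, rι, neg_add_cancel]; exact Z.zero_mem⟩
      · exact ⟨by rw [iι, map_neg, rι, add_neg_cancel]; exact Z.zero_mem,
          by rw [iι, rι, neg_add_cancel]; exact Z.zero_mem⟩
      · exact ⟨by rw [iι, map_neg, rι, add_neg_cancel]; exact Z.zero_mem,
          by rw [iι, rι, neg_add_cancel]; exact Z.zero_mem⟩
      · exact ⟨by rw [i2, r2 0 1 (by decide), add_neg_cancel]; exact Z.zero_mem,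
          by rw [i2, r2 0 1 (by decide), add_neg_cancel]; exact Z.zero_mem⟩
      · exact ⟨by rw [i2, r2 0 2 (by decide), add_neg_cancel]; exact Z.zero_mem,
          by rw [i2, r2 0 2 (by decide), add_neg_cancel]; exact Z.zero_mem⟩
      · exact ⟨by rw [i2, r2 1 2 (by decide), add_neg_cancel]; exact Z.zero_mem,
          by rw [i2, r2 1 2 (by decide), add_neg_cancel]; exact Z.zero_mem⟩
      · exact ⟨by rw [iω, map_neg, rω, neg_neg]; exact add_mem hωZ hωZ,
          by rw [iω, rω]; exact add_mem (neg_mem hωZ) (neg_mem hωZ)⟩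
    | zero => constructor <;> simpa using Z.zero_mem
    | add g₁ g₂ _ _ h1 h2 =>
      constructor
      · rw [map_add, map_add, add_add_add_comm]
        exact add_mem h1.1 h2.1
      · rw [map_add, map_add, add_add_add_comm]
        exact add_mem h1.2 h2.2
    | smul c g _ hg =>
      constructor
      · rw [map_smul, map_smul, ← smul_add]
        exact Z.smul_mem hg.1 c
      · rw [map_smul, map_smul, ← smul_add]
        exact Z.smul_mem hg.2 c
  exact key U (hall U)

theorem stmt_4 {V : Type*} [AddCommGroup V] [Module ℝ V] (Q : QuadraticForm ℝ V)
    (h : Module.finrank ℝ V = 3) (U : CliffordAlgebra Q) :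
    U + reverse (involute U) ∈ Subalgebra.center ℝ (CliffordAlgebra Q) ∧
    involute U + reverse U ∈ Subalgebra.center ℝ (CliffordAlgebra Q) := by
  haveI : FiniteDimensional ℝ V := FiniteDimensional.of_finrank_eq_succ h
  haveI : Invertible (2 : ℝ) := invertibleOfNonzero two_ne_zero
  obtain ⟨b, hb⟩ := LinearMap.BilinForm.exists_orthogonal_basis
    ((LinearMap.isSymm_def (B := QuadraticMap.associated (R := ℝ) Q)).mpr
      (fun x y => by simpa using QuadraticMap.associated_isSymm ℝ Q x y))
  refine aux_main Q (fun i => b (Fin.cast h.symm i)) ?_ ?_ U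
  · intro i j hij
    refine QuadraticMap.associated_isOrtho.mp (hb ?_)
    exact fun hc => hij (Fin.cast_injective h.symm hc)
  · have hr : Set.range (fun i : Fin 3 => b (Fin.cast h.symm i)) = Set.range b := by
      ext v
      constructor
      · rintro ⟨i, rfl⟩; exact ⟨_, rfl⟩
      · rintro ⟨i, rfl⟩; exact ⟨Fin.cast h i, by simp⟩
    rw [hr, b.span_eq]
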